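/- Let A be a real n×d matrix and let α > 0. Then there exists a diagonal matrix W ∈ ℝ^{n×n} with all diagonal entries in [0,1], such that the number of indices i with W_{ii} ≠ 1 is at most d/α, and τ_i(WA) ≤ α for every i ∈ {1,…,n}. -/

import Mathlib

open Matrix
open scoped Classical

/-- The leverage score of row `i` of `M`:
`τᵢ(M) = inf {‖x‖₂² : Mᵀx = mᵢ}` (the set is nonempty since `x = eᵢ` works). -/
noncomputable def lev {n d : ℕ} (M : Matrix (Fin n) (Fin d) ℝ) (i : Fin n) : ℝ :=
  sInf {t : ℝ | ∃ x : Fin n → ℝ, Mᵀ *ᵥ x = M i ∧ t = ∑ j, (x j) ^ 2}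

noncomputable section AuxStmt9
variable {n d : ℕ}

/-- regularized Gram matrix -/
noncomputable def gramR (M : Matrix (Fin n) (Fin d) ℝ) (δ : ℝ) : Matrix (Fin d) (Fin d) ℝ :=
  Mᵀ * M + δ • 1

/-- regularized leverage score -/
noncomputable def tauR (M : Matrix (Fin n) (Fin d) ℝ) (δ : ℝ) (i : Fin n) : ℝ :=
  (M i) ⬝ᵥ ((gramR M δ)⁻¹ *ᵥ (M i))

lemma gramR_posDef (M : Matrix (Fin n) (Fin d) ℝ) {δ : ℝ} (hδ : 0 < δ) :
    (gramR M δ).PosDef := by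
  have h1 : (Mᵀ * M).PosSemidef := by
    have := Matrix.posSemidef_conjTranspose_mul_self M
    simpa using this
  have h2 : ((δ • 1 : Matrix (Fin d) (Fin d) ℝ)).PosDef := by
    have : (δ • 1 : Matrix (Fin d) (Fin d) ℝ) = Matrix.diagonal (fun _ => δ) := by
      simp [Matrix.smul_one_eq_diagonal]
    rw [this]
    exact Matrix.PosDef.diagonal (fun _ => hδ)
  exact Matrix.PosDef.posSemidef_add h1 h2

lemma dot_symm {k : ℕ} (P : Matrix (Fin k) (Fin k) ℝ) (hP : Pᵀ = P) (x y : Fin k → ℝ) :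
    x ⬝ᵥ (P *ᵥ y) = y ⬝ᵥ (P *ᵥ x) := by
  rw [Matrix.dotProduct_mulVec]
  nth_rewrite 1 [← hP]
  rw [Matrix.vecMul_transpose, dotProduct_comm]

lemma quad_gram {M : Matrix (Fin n) (Fin d) ℝ} (x : Fin d → ℝ) :
    x ⬝ᵥ ((Mᵀ * M) *ᵥ x) = (M *ᵥ x) ⬝ᵥ (M *ᵥ x) := by
  rw [← Matrix.mulVec_mulVec, Matrix.dotProduct_mulVec, Matrix.vecMul_transpose]

lemma psd_quad {k : ℕ} {P : Matrix (Fin k) (Fin k) ℝ} (hP : P.PosSemidef) (x : Fin k → ℝ) :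
    0 ≤ x ⬝ᵥ (P *ᵥ x) := by
  simpa using hP.dotProduct_mulVec_nonneg x

/-- key anti-monotonicity: P ≤ Q (Loewner), both PD, then x Q⁻¹ x ≤ x P⁻¹ x -/
lemma inv_quad_anti {k : ℕ} {P Q : Matrix (Fin k) (Fin k) ℝ}
    (hP : P.PosDef) (hQ : Q.PosDef) (hPQ : (Q - P).PosSemidef) (a : Fin k → ℝ) :
    a ⬝ᵥ (Q⁻¹ *ᵥ a) ≤ a ⬝ᵥ (P⁻¹ *ᵥ a) := by
  have hPsym : Pᵀ = P := hP.isHermitian.eq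
  have hPu : IsUnit P.det := hP.det_pos.ne'.isUnit
  have hQu : IsUnit Q.det := hQ.det_pos.ne'.isUnit
  set y := Q⁻¹ *ᵥ a with hy
  set u := P⁻¹ *ᵥ a with hu
  have hQy : Q *ᵥ y = a := by
    rw [hy, Matrix.mulVec_mulVec, Matrix.mul_nonsing_inv _ hQu, Matrix.one_mulVec]
  have hPu' : P *ᵥ u = a := by
    rw [hu, Matrix.mulVec_mulVec, Matrix.mul_nonsing_inv _ hPu, Matrix.one_mulVec]
  -- 0 ≤ (y-u) P (y-u)
  have h0 : 0 ≤ (y - u) ⬝ᵥ (P *ᵥ (y - u)) := psd_quad hP.posSemidef _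
  have hexp : (y - u) ⬝ᵥ (P *ᵥ (y - u)) =
      y ⬝ᵥ (P *ᵥ y) - 2 * (y ⬝ᵥ a) + u ⬝ᵥ a := by
    have e1 : u ⬝ᵥ (P *ᵥ y) = y ⬝ᵥ a := by
      rw [dot_symm P hPsym u y, hPu']
    rw [Matrix.mulVec_sub, dotProduct_sub, sub_dotProduct,
      sub_dotProduct, e1, hPu']
    ring
  have hyP : y ⬝ᵥ (P *ᵥ y) ≤ y ⬝ᵥ (Q *ᵥ y) := by
    have := psd_quad hPQ y
    rw [Matrix.sub_mulVec, dotProduct_sub] at this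
    linarith
  have hyQ : y ⬝ᵥ (Q *ᵥ y) = y ⬝ᵥ a := by rw [hQy]
  have hfin : a ⬝ᵥ (Q⁻¹ *ᵥ a) = y ⬝ᵥ a := by
    rw [← hy, dotProduct_comm]
  have hfin2 : a ⬝ᵥ (P⁻¹ *ᵥ a) = u ⬝ᵥ a := by
    rw [← hu, dotProduct_comm]
  nlinarith [h0, hexp, hyP, hyQ]

lemma row_diag_mul (A : Matrix (Fin n) (Fin d) ℝ) (w : Fin n → ℝ) (j : Fin n) :
    (Matrix.diagonal w * A) j = w j • A j := by
  funext k
  simp [Matrix.diagonal_mul]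

lemma mulVec_diag_mul (A : Matrix (Fin n) (Fin d) ℝ) (w : Fin n → ℝ) (x : Fin d → ℝ) (i : Fin n) :
    ((Matrix.diagonal w * A) *ᵥ x) i = w i * (A i ⬝ᵥ x) := by
  simp only [Matrix.mulVec, row_diag_mul, dotProduct, Finset.mul_sum, Pi.smul_apply,
    smul_eq_mul]
  exact Finset.sum_congr rfl fun k _ => by ring

lemma quad_diag (A : Matrix (Fin n) (Fin d) ℝ) (w : Fin n → ℝ) (x : Fin d → ℝ) :
    x ⬝ᵥ ((((Matrix.diagonal w * A)ᵀ * (Matrix.diagonal w * A))) *ᵥ x)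
      = ∑ i, (w i)^2 * (A i ⬝ᵥ x)^2 := by
  rw [quad_gram]
  simp only [dotProduct, mulVec_diag_mul]
  exact Finset.sum_congr rfl fun i _ => by ring

lemma gram_mono {A : Matrix (Fin n) (Fin d) ℝ} {w w' : Fin n → ℝ} {δ : ℝ}
    (hsq : ∀ k, (w k)^2 ≤ (w' k)^2) :
    (gramR (Matrix.diagonal w' * A) δ - gramR (Matrix.diagonal w * A) δ).PosSemidef := by
  have hd : gramR (Matrix.diagonal w' * A) δ - gramR (Matrix.diagonal w * A) δ
      = (Matrix.diagonal w' * A)ᵀ * (Matrix.diagonal w' * A)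
        - (Matrix.diagonal w * A)ᵀ * (Matrix.diagonal w * A) := by
    rw [gramR, gramR]
    abel
  rw [hd]
  refine Matrix.PosSemidef.of_dotProduct_mulVec_nonneg ?_ ?_
  · have h1 : ((Matrix.diagonal w' * A)ᵀ * (Matrix.diagonal w' * A)).IsHermitian := by
      simpa using Matrix.isHermitian_conjTranspose_mul_self (Matrix.diagonal w' * A)
    have h2 : ((Matrix.diagonal w * A)ᵀ * (Matrix.diagonal w * A)).IsHermitian := by
      simpa using Matrix.isHermitian_conjTranspose_mul_self (Matrix.diagonal w * A)
    exact h1.sub h2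
  · intro x
    rw [show (star x) = x from by simp, Matrix.sub_mulVec, dotProduct_sub,
      quad_diag, quad_diag, ← Finset.sum_sub_distrib]
    refine Finset.sum_nonneg fun i _ => ?_
    have := hsq i
    nlinarith [sq_nonneg (A i ⬝ᵥ x)]

lemma tauR_nonneg (M : Matrix (Fin n) (Fin d) ℝ) {δ : ℝ} (hδ : 0 < δ) (i : Fin n) :
    0 ≤ tauR M δ i :=
  psd_quad ((gramR_posDef M hδ).inv).posSemidef _

lemma tauR_anti_w {A : Matrix (Fin n) (Fin d) ℝ} {w w' : Fin n → ℝ} {δ : ℝ} (hδ : 0 < δ)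
    (hsq : ∀ k, (w k)^2 ≤ (w' k)^2) (j : Fin n) (hj : w j = w' j) :
    tauR (Matrix.diagonal w' * A) δ j ≤ tauR (Matrix.diagonal w * A) δ j := by
  unfold tauR
  rw [row_diag_mul, row_diag_mul, ← hj]
  exact inv_quad_anti (gramR_posDef _ hδ) (gramR_posDef _ hδ) (gram_mono hsq) _

lemma tauR_anti_δ (M : Matrix (Fin n) (Fin d) ℝ) {δ δ' : ℝ} (hδ : 0 < δ) (hδ' : δ ≤ δ') :
    tauR M δ' i ≤ tauR M δ i := by
  refine inv_quad_anti (gramR_posDef M hδ) (gramR_posDef M (lt_of_lt_of_le hδ hδ')) ?_ _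
  have hd : gramR M δ' - gramR M δ = (δ' - δ) • (1 : Matrix (Fin d) (Fin d) ℝ) := by
    rw [gramR, gramR, sub_smul]
    abel
  rw [hd, Matrix.smul_one_eq_diagonal]
  exact Matrix.PosSemidef.diagonal fun _ => by simpa using sub_nonneg.mpr hδ'

lemma tauR_sum_le (M : Matrix (Fin n) (Fin d) ℝ) {δ : ℝ} (hδ : 0 < δ) :
    ∑ i, tauR M δ i ≤ (d : ℝ) := by
  set H := (gramR M δ)⁻¹ with hH
  have hHpd : H.PosDef := (gramR_posDef M hδ).inv
  have hdet : IsUnit (gramR M δ).det := (gramR_posDef M hδ).det_pos.ne'.isUnit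
  have htr : ∑ i, tauR M δ i = Matrix.trace (H * (Mᵀ * M)) := by
    simp only [tauR, dotProduct, Matrix.mulVec, Matrix.trace, Matrix.diag,
      Matrix.mul_apply, Matrix.transpose_apply, dotProduct, Finset.mul_sum, Finset.sum_mul]
    rw [Finset.sum_comm]
    refine Finset.sum_congr rfl fun j _ => ?_
    rw [Finset.sum_comm]
    refine Finset.sum_congr rfl fun k _ => ?_
    refine Finset.sum_congr rfl fun i _ => ?_
    ring
  have hsplit : H * (Mᵀ * M) = 1 - δ • H := by
    have h1 : H * gramR M δ = 1 := Matrix.nonsing_inv_mul _ hdet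
    have : H * gramR M δ = H * (Mᵀ * M) + δ • H := by
      rw [gramR, Matrix.mul_add, Matrix.mul_smul, Matrix.mul_one]
    rw [this] at h1
    rw [← h1]
    abel
  have htrH : 0 ≤ Matrix.trace H := by
    refine Finset.sum_nonneg fun j _ => ?_
    have := psd_quad hHpd.posSemidef (Pi.single j 1)
    simpa [Matrix.mulVec_single, dotProduct, Pi.single_apply, ite_mul] using this
  rw [htr, hsplit, Matrix.trace_sub, Matrix.trace_smul, Matrix.trace_one]
  simp only [smul_eq_mul]
  have : 0 ≤ δ * Matrix.trace H := mul_nonneg hδ.le htrH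
  simp only [Finset.card_univ, Fintype.card_fin]
  linarith

lemma tauR_cont (A : Matrix (Fin n) (Fin d) ℝ) {δ : ℝ} (hδ : 0 < δ) (i : Fin n) :
    Continuous fun w : Fin n → ℝ => tauR (Matrix.diagonal w * A) δ i := by
  have hBc : Continuous fun w : Fin n → ℝ => Matrix.diagonal w * A :=
    (continuous_id.matrix_diagonal).matrix_mul continuous_const
  have hGc : Continuous fun w : Fin n → ℝ => gramR (Matrix.diagonal w * A) δ := by
    unfold gramR
    exact (hBc.matrix_transpose.matrix_mul hBc).add continuous_const
  have hdet0 : ∀ w : Fin n → ℝ, (gramR (Matrix.diagonal w * A) δ).det ≠ 0 :=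
    fun w => (gramR_posDef _ hδ).det_pos.ne'
  have hIc : Continuous fun w : Fin n → ℝ => (gramR (Matrix.diagonal w * A) δ)⁻¹ := by
    have heq : (fun w : Fin n → ℝ => (gramR (Matrix.diagonal w * A) δ)⁻¹)
        = fun w => ((gramR (Matrix.diagonal w * A) δ).det)⁻¹
            • (gramR (Matrix.diagonal w * A) δ).adjugate := by
      funext w; rw [Matrix.inv_def, Ring.inverse_eq_inv']
    rw [heq]
    exact ((hGc.matrix_det.inv₀ hdet0)).smul hGc.matrix_adjugate
  have hrow : Continuous fun w : Fin n → ℝ => (Matrix.diagonal w * A) i := by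
    have heq : (fun w : Fin n → ℝ => (Matrix.diagonal w * A) i) = fun w => w i • A i := by
      funext w; exact row_diag_mul A w i
    rw [heq]; exact (continuous_apply i).smul continuous_const
  exact hrow.dotProduct (hIc.matrix_mulVec hrow)

lemma exists_w_fixed (A : Matrix (Fin n) (Fin d) ℝ) {α δ : ℝ} (hα : 0 < α) (hδ : 0 < δ) :
    ∃ w : Fin n → ℝ, w ∈ Set.Icc (0 : Fin n → ℝ) 1 ∧
      (((Finset.univ.filter fun i => w i ≠ 1)).card : ℝ) ≤ (d : ℝ) / α ∧
      ∀ i, tauR (Matrix.diagonal w * A) δ i ≤ α := by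
  classical
  set C : Set (Fin n → ℝ) :=
    Set.Icc (0 : Fin n → ℝ) 1 ∩ ⋂ i, {w | tauR (Matrix.diagonal w * A) δ i ≤ α} with hC
  have hclosed : IsClosed (⋂ i, {w : Fin n → ℝ | tauR (Matrix.diagonal w * A) δ i ≤ α}) :=
    isClosed_iInter fun i => isClosed_le (tauR_cont A hδ i) continuous_const
  have hcomp : IsCompact C := (isCompact_Icc).inter_right hclosed
  have htau0 : ∀ i, tauR (Matrix.diagonal (0 : Fin n → ℝ) * A) δ i = 0 := by
    intro i
    rw [tauR, row_diag_mul]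
    simp
  have hne : C.Nonempty := by
    refine ⟨0, ⟨le_refl _, zero_le_one⟩, ?_⟩
    simp only [Set.mem_iInter, Set.mem_setOf_eq]
    intro i
    rw [htau0 i]
    exact hα.le
  have hfc : Continuous fun w : Fin n → ℝ => ∑ i, w i :=
    continuous_finset_sum _ fun i _ => continuous_apply i
  obtain ⟨w, hwC, hmax⟩ := hcomp.exists_isMaxOn hne hfc.continuousOn
  have hwIcc : w ∈ Set.Icc (0 : Fin n → ℝ) 1 := hwC.1
  have hwtau : ∀ i, tauR (Matrix.diagonal w * A) δ i ≤ α := by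
    have := hwC.2
    simp only [Set.mem_iInter, Set.mem_setOf_eq] at this
    exact this
  have hw0 : ∀ i, 0 ≤ w i := fun i => hwIcc.1 i
  have hw1 : ∀ i, w i ≤ 1 := fun i => hwIcc.2 i
  -- key claim : at the maximum, deficient rows have saturated leverage
  have hkey : ∀ i, w i ≠ 1 → α ≤ tauR (Matrix.diagonal w * A) δ i := by
    intro i hne1
    by_contra hlt
    push_neg at hlt
    have hwi1 : w i < 1 := lt_of_le_of_ne (hw1 i) hne1
    set p : ℝ → (Fin n → ℝ) := fun t => Function.update w i (w i + t) with hp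
    have hpc : Continuous p := by
      refine continuous_pi fun j => ?_
      by_cases hj : j = i
      · subst hj
        simpa [hp] using (continuous_add_left (w j))
      · simpa [hp, Function.update_of_ne hj] using (continuous_const : Continuous fun _ : ℝ => w j)
    have hF : Continuous fun t => tauR (Matrix.diagonal (p t) * A) δ i :=
      (tauR_cont A hδ i).comp hpc
    have hF0 : tauR (Matrix.diagonal (p 0) * A) δ i < α := by
      have : p 0 = w := by
        funext j; by_cases hj : j = i
        · subst hj; simp [hp]
        · simp [hp, Function.update_of_ne hj]
      rw [this]; exact hlt
    have h1 : ∀ᶠ t in nhdsWithin (0:ℝ) (Set.Ioi 0),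
        tauR (Matrix.diagonal (p t) * A) δ i < α :=
      ((hF.continuousAt (x := 0)).eventually_lt_const hF0).filter_mono nhdsWithin_le_nhds
    have h2 : ∀ᶠ t in nhdsWithin (0:ℝ) (Set.Ioi 0), t < 1 - w i :=
      (eventually_lt_nhds (show (0:ℝ) < 1 - w i by linarith)).filter_mono nhdsWithin_le_nhds
    have h3 : ∀ᶠ t in nhdsWithin (0:ℝ) (Set.Ioi 0), 0 < t :=
      eventually_mem_nhdsWithin
    obtain ⟨t, ht1, ht2, ht3⟩ := (h1.and (h2.and h3)).exists
    set w' := p t with hw'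
    have hw'j : ∀ j, j ≠ i → w' j = w j := fun j hj => Function.update_of_ne hj _ _
    have hw'i : w' i = w i + t := Function.update_self _ _ _
    have hsq : ∀ k, (w k)^2 ≤ (w' k)^2 := by
      intro k
      by_cases hk : k = i
      · subst hk; rw [hw'i]; nlinarith [hw0 k, ht3]
      · rw [hw'j k hk]
    have hw'val : ∀ j, 0 ≤ w' j ∧ w' j ≤ 1 := by
      intro j
      by_cases hj : j = i
      · subst hj; rw [hw'i]
        constructor
        · linarith [hw0 j, ht3]
        · linarith [ht2]
      · rw [hw'j j hj]; exact ⟨hw0 j, hw1 j⟩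
    have hw'C : w' ∈ C := by
      refine ⟨⟨fun j => ?_, fun j => ?_⟩, ?_⟩
      · simpa using (hw'val j).1
      · simpa using (hw'val j).2
      · simp only [Set.mem_iInter, Set.mem_setOf_eq]
        intro j
        by_cases hj : j = i
        · subst hj; exact ht1.le
        · calc tauR (Matrix.diagonal w' * A) δ j
              ≤ tauR (Matrix.diagonal w * A) δ j :=
                tauR_anti_w hδ hsq j (hw'j j hj).symm
            _ ≤ α := hwtau j
    have hsum : ∑ j, w j < ∑ j, w' j := by
      have heq : ∑ j, w' j = (w i + t) + ∑ j ∈ Finset.univ.erase i, w j := by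
        rw [← Finset.add_sum_erase _ w' (Finset.mem_univ i)]
        rw [hw'i]
        congr 1
        exact Finset.sum_congr rfl fun j hj =>
            hw'j j (Finset.ne_of_mem_erase hj)
      rw [heq, ← Finset.add_sum_erase _ w (Finset.mem_univ i)]
      linarith [ht3]
    exact absurd hsum (not_lt.mpr (hmax hw'C))
  -- counting
  refine ⟨w, hwIcc, ?_, hwtau⟩
  set S := Finset.univ.filter fun i => w i ≠ 1 with hS
  have hcount : (S.card : ℝ) * α ≤ (d : ℝ) := by
    calc (S.card : ℝ) * α = ∑ _i ∈ S, α := by rw [Finset.sum_const, nsmul_eq_mul]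
      _ ≤ ∑ i ∈ S, tauR (Matrix.diagonal w * A) δ i := by
          refine Finset.sum_le_sum fun i hi => hkey i ?_
          simpa [hS] using hi
      _ ≤ ∑ i, tauR (Matrix.diagonal w * A) δ i := by
          refine Finset.sum_le_sum_of_subset_of_nonneg (Finset.subset_univ S) fun i _ _ =>
            tauR_nonneg _ hδ i
      _ ≤ (d : ℝ) := tauR_sum_le _ hδ
  rw [le_div_iff₀ hα]
  exact hcount

lemma dot_self_nonneg {k : ℕ} (v : Fin k → ℝ) : 0 ≤ v ⬝ᵥ v :=
  Finset.sum_nonneg fun j _ => mul_self_nonneg _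

lemma lev_le_of_tauR (M : Matrix (Fin n) (Fin d) ℝ) (i : Fin n) {α : ℝ} (hα : 0 ≤ α)
    (h : ∀ δ : ℝ, 0 < δ → tauR M δ i ≤ α) : lev M i ≤ α := by
  classical
  set m : Fin d → ℝ := M i with hm
  set z : ℝ → (Fin d → ℝ) := fun δ => (gramR M δ)⁻¹ *ᵥ m with hz
  set x : ℝ → (Fin n → ℝ) := fun δ => M *ᵥ z δ with hx
  have f1 : ∀ δ : ℝ, 0 < δ → (gramR M δ) *ᵥ (z δ) = m := by
    intro δ hδ
    rw [hz]
    simp only [Matrix.mulVec_mulVec]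
    rw [Matrix.mul_nonsing_inv _ (gramR_posDef M hδ).det_pos.ne'.isUnit, Matrix.one_mulVec]
  have ftau : ∀ δ : ℝ, 0 < δ → z δ ⬝ᵥ m = tauR M δ i := by
    intro δ hδ
    rw [dotProduct_comm]
    rfl
  have f2 : ∀ δ : ℝ, 0 < δ →
      (x δ ⬝ᵥ x δ) + δ * (z δ ⬝ᵥ z δ) = z δ ⬝ᵥ m := by
    intro δ hδ
    have h1 : z δ ⬝ᵥ ((gramR M δ) *ᵥ z δ) = z δ ⬝ᵥ m := by rw [f1 δ hδ]
    rw [gramR, Matrix.add_mulVec, dotProduct_add, quad_gram] at h1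
    have h6 : z δ ⬝ᵥ ((δ • (1 : Matrix (Fin d) (Fin d) ℝ)) *ᵥ z δ) = δ * (z δ ⬝ᵥ z δ) := by
      rw [Matrix.smul_mulVec, Matrix.one_mulVec, dotProduct_smul, smul_eq_mul]
    rw [h6] at h1
    exact h1
  have f4 : ∀ δ : ℝ, 0 < δ → x δ ⬝ᵥ x δ ≤ α := by
    intro δ hδ
    have h2 := f2 δ hδ
    have h3 := ftau δ hδ
    have h4 := h δ hδ
    have h5 : 0 ≤ z δ ⬝ᵥ z δ := dot_self_nonneg (z δ)
    nlinarith
  have dot_sq : ∀ {k : ℕ} (v : Fin k → ℝ), v ⬝ᵥ v = ∑ j, (v j)^2 := by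
    intro k v
    simp [dotProduct, pow_two]
  have fcoord : ∀ (δ : ℝ), 0 < δ → ∀ j, (x δ j)^2 ≤ α := by
    intro δ hδ j
    have h1 : (x δ j)^2 ≤ x δ ⬝ᵥ x δ := by
      rw [dot_sq]
      exact Finset.single_le_sum (fun k _ => sq_nonneg (x δ k)) (Finset.mem_univ j)
    exact h1.trans (f4 δ hδ)
  have f7 : ∀ (δ : ℝ), 0 < δ → ∀ j, |(δ • z δ) j| ≤ Real.sqrt (δ / 4) := by
    intro δ hδ j
    set s := x δ ⬝ᵥ x δ with hs
    set t := z δ ⬝ᵥ z δ with ht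
    have hs0 : 0 ≤ s := dot_self_nonneg _
    have ht0 : 0 ≤ t := dot_self_nonneg _
    have hzm : z δ ⬝ᵥ m = x δ i := by
      rw [hm, dotProduct, hx]
      simp only [Matrix.mulVec, dotProduct]
      exact Finset.sum_congr rfl fun j _ => mul_comm _ _
    have hxi : (x δ i)^2 ≤ s := by
      rw [hs, dot_sq]
      exact Finset.single_le_sum (fun k _ => sq_nonneg (x δ k)) (Finset.mem_univ i)
    have hxis : x δ i ≤ Real.sqrt s := by
      calc x δ i ≤ |x δ i| := le_abs_self _
        _ = Real.sqrt ((x δ i)^2) := (Real.sqrt_sq_eq_abs _).symm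
        _ ≤ Real.sqrt s := Real.sqrt_le_sqrt hxi
    have hst : s + δ * t = x δ i := by rw [← hzm]; exact f2 δ hδ
    have hsqrt : s = (Real.sqrt s)^2 := (Real.sq_sqrt hs0).symm
    have hδt : δ * t ≤ 1 / 4 := by
      nlinarith [Real.sqrt_nonneg s, sq_nonneg (Real.sqrt s - 1/2), hst, hxis, hsqrt]
    have hbig : ((δ • z δ) j)^2 ≤ δ / 4 := by
      have h1 : ((δ • z δ) j)^2 ≤ (δ • z δ) ⬝ᵥ (δ • z δ) := by
        rw [dot_sq]
        exact Finset.single_le_sum (fun k _ => sq_nonneg ((δ • z δ) k)) (Finset.mem_univ j)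
      have h2 : (δ • z δ) ⬝ᵥ (δ • z δ) = δ * (δ * t) := by
        rw [ht, smul_dotProduct, dotProduct_smul, smul_eq_mul, smul_eq_mul]
      have h3 : δ * (δ * t) ≤ δ / 4 := by nlinarith
      linarith
    calc |(δ • z δ) j| = Real.sqrt (((δ • z δ) j)^2) := (Real.sqrt_sq_eq_abs _).symm
      _ ≤ Real.sqrt (δ / 4) := Real.sqrt_le_sqrt hbig
  have f6 : ∀ (δ : ℝ), 0 < δ → Mᵀ *ᵥ x δ = m - δ • z δ := by
    intro δ hδ
    rw [hx]
    simp only [Matrix.mulVec_mulVec]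
    have hMM : Mᵀ * M = gramR M δ - δ • 1 := by rw [gramR]; abel
    rw [hMM, Matrix.sub_mulVec, f1 δ hδ, Matrix.smul_mulVec, Matrix.one_mulVec]
  -- the sequence of approximate minimizers
  set δs : ℕ → ℝ := fun k => 1 / (k + 1) with hδs
  have hδpos : ∀ k, 0 < δs k := fun k => by positivity
  have hδtend : Filter.Tendsto δs Filter.atTop (nhds 0) :=
    tendsto_one_div_add_atTop_nhds_zero_nat
  set c := Real.sqrt α with hc
  have hmem : ∀ k, x (δs k) ∈ Set.Icc (fun _ : Fin n => -c) (fun _ : Fin n => c) := by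
    intro k
    constructor
    · intro j
      have := fcoord (δs k) (hδpos k) j
      have h2 : |x (δs k) j| ≤ c := by
        rw [hc, ← Real.sqrt_sq_eq_abs]
        exact Real.sqrt_le_sqrt this
      have := abs_le.mp h2
      simpa using this.1
    · intro j
      have := fcoord (δs k) (hδpos k) j
      have h2 : |x (δs k) j| ≤ c := by
        rw [hc, ← Real.sqrt_sq_eq_abs]
        exact Real.sqrt_le_sqrt this
      exact (abs_le.mp h2).2
  obtain ⟨a, _, φ, hφ, hlim⟩ := (isCompact_Icc).tendsto_subseq hmem
  have hcontMv : Continuous fun v : Fin n → ℝ => Mᵀ *ᵥ v :=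
    continuous_const.matrix_mulVec continuous_id
  have hA1 : Filter.Tendsto (fun k => Mᵀ *ᵥ (x (δs (φ k)))) Filter.atTop (nhds (Mᵀ *ᵥ a)) :=
    (hcontMv.tendsto a).comp hlim
  have hzero : Filter.Tendsto (fun k => (δs (φ k)) • z (δs (φ k))) Filter.atTop
      (nhds (0 : Fin d → ℝ)) := by
    rw [tendsto_pi_nhds]
    intro j
    have hg : Filter.Tendsto (fun k => Real.sqrt (δs (φ k) / 4)) Filter.atTop (nhds 0) := by
      have h1 : Filter.Tendsto (fun k => δs (φ k)) Filter.atTop (nhds 0) :=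
        hδtend.comp hφ.tendsto_atTop
      have h2 : Filter.Tendsto (fun k => δs (φ k) / 4) Filter.atTop (nhds 0) := by
        simpa using h1.div_const 4
      have h3 := (Real.continuous_sqrt.tendsto 0).comp h2
      rw [Real.sqrt_zero] at h3
      exact h3
    refine squeeze_zero_norm (fun k => ?_) hg
    exact f7 (δs (φ k)) (hδpos (φ k)) j
  have hA2 : Filter.Tendsto (fun k => Mᵀ *ᵥ (x (δs (φ k)))) Filter.atTop (nhds m) := by
    have heq : (fun k => Mᵀ *ᵥ (x (δs (φ k))))
        = fun k => m - (δs (φ k)) • z (δs (φ k)) := by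
      funext k
      exact f6 (δs (φ k)) (hδpos (φ k))
    rw [heq]
    simpa using (tendsto_const_nhds (x := m) (f := Filter.atTop (α := ℕ))).sub hzero
  have hMa : Mᵀ *ᵥ a = m := tendsto_nhds_unique hA1 hA2
  have hsum_a : ∑ j, (a j)^2 ≤ α := by
    have hcont2 : Continuous fun v : Fin n → ℝ => ∑ j, (v j)^2 :=
      continuous_finset_sum _ fun j _ => (continuous_apply j).pow 2
    have htt : Filter.Tendsto (fun k => ∑ j, (x (δs (φ k)) j)^2) Filter.atTop
        (nhds (∑ j, (a j)^2)) := (hcont2.tendsto a).comp hlim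
    refine le_of_tendsto htt (Filter.Eventually.of_forall fun k => ?_)
    rw [← dot_sq]
    exact f4 (δs (φ k)) (hδpos (φ k))
  have hbdd : BddBelow {t : ℝ | ∃ x : Fin n → ℝ, Mᵀ *ᵥ x = M i ∧ t = ∑ j, (x j) ^ 2} := by
    refine ⟨0, fun t ht => ?_⟩
    obtain ⟨x, _, rfl⟩ := ht
    positivity
  have hmemS : (∑ j, (a j)^2) ∈ {t : ℝ | ∃ x : Fin n → ℝ, Mᵀ *ᵥ x = M i ∧ t = ∑ j, (x j) ^ 2} :=
    ⟨a, by rw [hMa, hm], rfl⟩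
  exact le_trans (csInf_le hbdd hmemS) hsum_a

end AuxStmt9

/-- coherence reducing reweighting: for any `A ∈ ℝ^{n×d}` and `α > 0`,
there is a diagonal `W` with entries in `[0,1]`, at most `d/α` of which differ from `1`,
such that `τᵢ(WA) ≤ α` for every `i`. -/
theorem stmt9 {n d : ℕ} (A : Matrix (Fin n) (Fin d) ℝ) (α : ℝ) (hα : 0 < α) :
    ∃ w : Fin n → ℝ,
      (∀ i, 0 ≤ w i ∧ w i ≤ 1) ∧
      ((Finset.univ.filter (fun i => w i ≠ 1)).card : ℝ) ≤ (d : ℝ) / α ∧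
      (∀ i, lev (Matrix.diagonal w * A) i ≤ α) := by
  classical
  have hex : ∀ k : ℕ, ∃ w : Fin n → ℝ, w ∈ Set.Icc (0 : Fin n → ℝ) 1 ∧
      (((Finset.univ.filter fun i => w i ≠ 1)).card : ℝ) ≤ (d : ℝ) / α ∧
      ∀ i, tauR (Matrix.diagonal w * A) (1/(k+1)) i ≤ α :=
    fun k => exists_w_fixed A hα (by positivity)
  choose ws hIcc hcard htau using hex
  obtain ⟨w, hwIcc, φ, hφ, hlim⟩ := isCompact_Icc.tendsto_subseq hIcc
  refine ⟨w, fun i => ⟨hwIcc.1 i, hwIcc.2 i⟩, ?_, ?_⟩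
  · set S := Finset.univ.filter fun i => w i ≠ 1 with hS
    have hev : ∀ i ∈ S, ∀ᶠ k in Filter.atTop, ws (φ k) i < 1 := by
      intro i hi
      have hne1 : w i ≠ 1 := by simpa [hS] using hi
      have hwi : w i < 1 := lt_of_le_of_ne (hwIcc.2 i) hne1
      have hco : Filter.Tendsto (fun k => ws (φ k) i) Filter.atTop (nhds (w i)) :=
        (tendsto_pi_nhds.mp hlim) i
      exact hco.eventually_lt_const hwi
    have hallev : ∀ᶠ k in Filter.atTop, ∀ i ∈ S, ws (φ k) i < 1 :=
      (Filter.eventually_all_finset S).mpr hev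
    obtain ⟨k, hk⟩ := hallev.exists
    have hsub : S ⊆ Finset.univ.filter fun i => ws (φ k) i ≠ 1 := by
      intro i hi
      simp only [Finset.mem_filter, Finset.mem_univ, true_and]
      exact (hk i hi).ne
    calc (S.card : ℝ) ≤ ((Finset.univ.filter fun i => ws (φ k) i ≠ 1).card : ℝ) :=
          Nat.cast_le.mpr (Finset.card_le_card hsub)
      _ ≤ (d : ℝ) / α := hcard (φ k)
  · intro i
    refine lev_le_of_tauR _ _ hα.le ?_
    intro δ hδ
    have hcont := tauR_cont A hδ i
    have htt : Filter.Tendsto (fun k => tauR (Matrix.diagonal (ws (φ k)) * A) δ i)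
        Filter.atTop (nhds (tauR (Matrix.diagonal w * A) δ i)) :=
      (hcont.tendsto w).comp hlim
    refine le_of_tendsto htt ?_
    obtain ⟨N, hN⟩ := exists_nat_gt (1/δ)
    refine Filter.eventually_atTop.mpr ⟨N, fun k hk => ?_⟩
    have h1 : (N : ℝ) ≤ (φ k : ℝ) := by
      have h2 : k ≤ φ k := hφ.le_apply
      exact_mod_cast le_trans hk h2
    have hsmall : (0:ℝ) < 1/((φ k : ℝ) + 1) := by positivity
    have hle : 1/((φ k : ℝ) + 1) ≤ δ := by
      rw [div_le_iff₀ (by positivity)]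
      have h3 : 1/δ < (φ k : ℝ) + 1 := by linarith
      rw [div_lt_iff₀ hδ] at h3
      nlinarith
    exact le_trans (tauR_anti_δ _ hsmall hle) (htau (φ k) i)
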